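/- Let n, d ≥ 1 and let X_0, X_1, …, X_n ∈ Herm_d. Identify X = (X_0, X_1, …, X_n) with the tensor Σ_{s=0}^n e_s ⊗ X_s ∈ R^{n+1} ⊗ Herm_d, where (e_0, …, e_n) is the standard basis of R^{n+1}. Then the following are equivalent: (1) X ∈ L_n ⊗max PSD(C^d); (2) X_0 is positive semidefinite and X_0 ⊗ X_0 − Σ_{s=1}^n X_s ⊗ X_s ∈ PSD(C^d) ⊗max PSD(C^d). -/

import Mathlib

open scoped TensorProduct ComplexOrder
open Set

noncomputable section

/-- The dual cone of a set `C`, inside the algebraic dual space. -/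
def dualConeSet {V : Type*} [AddCommGroup V] [Module ℝ V] (C : Set V) :
    Set (Module.Dual ℝ V) := {φ | ∀ x ∈ C, 0 ≤ φ x}

/-- A proper cone: a closed convex cone which is generating (`C - C = V`) and
pointed (`C ∩ (-C) = {0}`). -/
def IsProperCone {V : Type*} [NormedAddCommGroup V] [NormedSpace ℝ V] (C : Set V) : Prop :=
  IsClosed C ∧ Convex ℝ C ∧ (∀ ⦃c : ℝ⦄, 0 < c → ∀ ⦃x⦄, x ∈ C → c • x ∈ C) ∧
    (∀ v : V, ∃ x ∈ C, ∃ y ∈ C, v = x - y) ∧ C ∩ (-C) = {0}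

/-- `(C₁,C₂)`-entanglement breaking maps. -/
def IsEntanglementBreaking {V₁ V₂ : Type*} [AddCommGroup V₁] [Module ℝ V₁]
    [AddCommGroup V₂] [Module ℝ V₂] (C₁ : Set V₁) (C₂ : Set V₂) (P : V₁ →ₗ[ℝ] V₂) : Prop :=
  ∃ (m : ℕ) (φ : Fin m → Module.Dual ℝ V₁) (x : Fin m → V₂),
    (∀ i, φ i ∈ dualConeSet C₁) ∧ (∀ i, x i ∈ C₂) ∧ ∀ v, P v = ∑ i, φ i v • x i

/-- The `k`-fold minimal tensor power of a cone. -/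
def minTensorPow {V : Type*} [AddCommGroup V] [Module ℝ V] (C : Set V) (k : ℕ) :
    Set (⨂[ℝ] _ : Fin k, V) :=
  convexHull ℝ {z | ∃ x : Fin k → V, (∀ i, x i ∈ C) ∧ z = PiTensorProduct.tprod ℝ x}

/-- The functional on the `k`-fold tensor power induced by a family of functionals,
`x₁ ⊗ ⋯ ⊗ x_k ↦ ∏ i, φ i (x i)`. -/
def dualPairing {V : Type*} [AddCommGroup V] [Module ℝ V] {k : ℕ}
    (φ : Fin k → Module.Dual ℝ V) : (⨂[ℝ] _ : Fin k, V) →ₗ[ℝ] ℝ :=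
  PiTensorProduct.lift ((MultilinearMap.mkPiAlgebra ℝ (Fin k) ℝ).compLinearMap φ)

/-- The `k`-fold maximal tensor power of a cone: the dual of the minimal tensor power of
the dual cone, under the canonical identification of `(V^{⊗k})*` with `(V*)^{⊗k}`. -/
def maxTensorPow {V : Type*} [AddCommGroup V] [Module ℝ V] (C : Set V) (k : ℕ) :
    Set (⨂[ℝ] _ : Fin k, V) :=
  {z | ∀ φ : Fin k → Module.Dual ℝ V, (∀ i, φ i ∈ dualConeSet C) → 0 ≤ dualPairing φ z}

/-- `(C₁,C₂)`-entanglement annihilating maps: `P^{⊗k}` maps the `k`-fold maximal tensor power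
of `C₁` into the `k`-fold minimal tensor power of `C₂`, for every `k ≥ 1`. -/
def IsEntanglementAnnihilating {V₁ V₂ : Type*} [AddCommGroup V₁] [Module ℝ V₁]
    [AddCommGroup V₂] [Module ℝ V₂] (C₁ : Set V₁) (C₂ : Set V₂) (P : V₁ →ₗ[ℝ] V₂) : Prop :=
  ∀ k : ℕ, 1 ≤ k →
    Set.MapsTo (⇑(PiTensorProduct.map fun _ : Fin k => P))
      (maxTensorPow C₁ k) (minTensorPow C₂ k)

/-- A pair of cones is resilient if every entanglement annihilating map between them is
entanglement breaking. -/
def IsResilientPair {V₁ V₂ : Type*} [AddCommGroup V₁] [Module ℝ V₁]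
    [AddCommGroup V₂] [Module ℝ V₂] (C₁ : Set V₁) (C₂ : Set V₂) : Prop :=
  ∀ P : V₁ →ₗ[ℝ] V₂, IsEntanglementAnnihilating C₁ C₂ P → IsEntanglementBreaking C₁ C₂ P

/-- The minimal tensor product of two cones. -/
def minTensor {V W : Type*} [AddCommGroup V] [Module ℝ V] [AddCommGroup W] [Module ℝ W]
    (C : Set V) (D : Set W) : Set (V ⊗[ℝ] W) :=
  convexHull ℝ {z | ∃ x ∈ C, ∃ y ∈ D, z = x ⊗ₜ[ℝ] y}

/-- The maximal tensor product of two cones: the dual of the minimal tensor product of the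
dual cones, under the canonical identification of `(V ⊗ W)*` with `V* ⊗ W*`. -/
def maxTensor {V W : Type*} [AddCommGroup V] [Module ℝ V] [AddCommGroup W] [Module ℝ W]
    (C : Set V) (D : Set W) : Set (V ⊗[ℝ] W) :=
  {z | ∀ φ ∈ dualConeSet C, ∀ ψ ∈ dualConeSet D,
      0 ≤ TensorProduct.dualDistrib ℝ V W (φ ⊗ₜ[ℝ] ψ) z}

/-- The Lorentz cone `L_n ⊆ ℝ ⊕ ℝⁿ`. -/
def lorentzCone (n : ℕ) : Set (ℝ × EuclideanSpace ℝ (Fin n)) := {p | ‖p.2‖ ≤ p.1}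

abbrev HermMat (d : ℕ) := ↥(selfAdjoint (Matrix (Fin d) (Fin d) ℂ))

/-- The cone of positive semidefinite matrices inside the Hermitian matrices. -/
def psdCone (d : ℕ) : Set (HermMat d) :=
  {X | Matrix.PosSemidef (X : Matrix (Fin d) (Fin d) ℂ)}

lemma key_ineq {n : ℕ} (y u : Fin n → ℝ) (t a : ℝ) (ht : 0 ≤ t) (ha : 0 ≤ a)
    (h1 : ∑ s, y s ^ 2 ≤ t ^ 2) (h2 : ∑ s, u s ^ 2 ≤ a ^ 2) :
    0 ≤ t * a + ∑ s, y s * u s := by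
  have hcs := Finset.sum_mul_sq_le_sq_mul_sq Finset.univ y u
  have h3 : (∑ s, y s * u s) ^ 2 ≤ (t * a) ^ 2 := by
    nlinarith [Finset.sum_nonneg (fun s (_ : s ∈ Finset.univ) => sq_nonneg (y s)),
      Finset.sum_nonneg (fun s (_ : s ∈ Finset.univ) => sq_nonneg (u s))]
  nlinarith [mul_nonneg ht ha]

lemma sum_single_eq {n : ℕ} (w : EuclideanSpace ℝ (Fin n)) :
    ∑ s, w s • EuclideanSpace.single s (1 : ℝ) = w := by
  have := (EuclideanSpace.basisFun (Fin n) ℝ).sum_repr w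
  simpa [EuclideanSpace.basisFun_apply, EuclideanSpace.basisFun_repr] using this

lemma euclid_norm_sq {n : ℕ} (w : EuclideanSpace ℝ (Fin n)) :
    ‖w‖ ^ 2 = ∑ s, w s ^ 2 := by
  rw [EuclideanSpace.norm_eq, Real.sq_sqrt (by positivity)]
  simp [Real.norm_eq_abs, sq_abs]

/-- The functional `p ↦ t p₀ + ⟨y, p₁⟩`. -/
def lorentzFunctional {n : ℕ} (t : ℝ) (y : Fin n → ℝ) :
    Module.Dual ℝ (ℝ × EuclideanSpace ℝ (Fin n)) where
  toFun p := t * p.1 + ∑ s, y s * p.2 s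
  map_add' p q := by
    simp only [Prod.fst_add, Prod.snd_add, PiLp.add_apply, mul_add, Finset.sum_add_distrib]
    ring
  map_smul' c p := by
    simp only [Prod.smul_fst, Prod.smul_snd, PiLp.smul_apply, smul_eq_mul, RingHom.id_apply]
    rw [mul_add, Finset.mul_sum]
    exact congrArg₂ (· + ·) (by ring) (Finset.sum_congr rfl fun s _ => by ring)

@[simp] lemma lorentzFunctional_apply {n : ℕ} (t : ℝ) (y : Fin n → ℝ)
    (p : ℝ × EuclideanSpace ℝ (Fin n)) :
    lorentzFunctional t y p = t * p.1 + ∑ s, y s * p.2 s := rfl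

lemma lorentzFunctional_mem {n : ℕ} (t : ℝ) (y : Fin n → ℝ) (ht : 0 ≤ t)
    (hy : ∑ s, y s ^ 2 ≤ t ^ 2) :
    lorentzFunctional t y ∈ dualConeSet (lorentzCone n) := by
  intro p hp
  have hp1 : (0 : ℝ) ≤ p.1 := le_trans (norm_nonneg _) hp
  have hp2 : ∑ s, (p.2 s) ^ 2 ≤ p.1 ^ 2 := by
    rw [← euclid_norm_sq]
    exact pow_le_pow_left₀ (norm_nonneg _) hp 2
  simpa using key_ineq y (fun s => p.2 s) t p.1 ht hp1 hy hp2

lemma dual_lorentz_bounds {n : ℕ} (φ : Module.Dual ℝ (ℝ × EuclideanSpace ℝ (Fin n)))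
    (hφ : φ ∈ dualConeSet (lorentzCone n)) :
    0 ≤ φ ((1 : ℝ), (0 : EuclideanSpace ℝ (Fin n))) ∧
      ∑ s, (φ ((0 : ℝ), EuclideanSpace.single s (1 : ℝ))) ^ 2 ≤
        (φ ((1 : ℝ), (0 : EuclideanSpace ℝ (Fin n)))) ^ 2 := by
  set t : ℝ := φ ((1 : ℝ), (0 : EuclideanSpace ℝ (Fin n))) with htdef
  set y : Fin n → ℝ := fun s => φ ((0 : ℝ), EuclideanSpace.single s (1 : ℝ)) with hydef
  have ht : 0 ≤ t := hφ _ (by simp [lorentzCone])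
  set yvec : EuclideanSpace ℝ (Fin n) := (WithLp.equiv 2 (Fin n → ℝ)).symm y with hyv
  have hyvs : ∀ s, yvec s = y s := fun s => rfl
  set r : ℝ := ‖yvec‖ with hrdef
  have hr0 : 0 ≤ r := norm_nonneg _
  have hr2 : r ^ 2 = ∑ s, y s ^ 2 := by
    rw [hrdef, euclid_norm_sq]
    rfl
  have hmem : ((r, -yvec) : ℝ × EuclideanSpace ℝ (Fin n)) ∈ lorentzCone n := by
    simp [lorentzCone, hrdef]
  have hdecomp : ((r, -yvec) : ℝ × EuclideanSpace ℝ (Fin n)) =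
      r • ((1 : ℝ), (0 : EuclideanSpace ℝ (Fin n))) +
        ∑ s, (-(y s)) • ((0 : ℝ), EuclideanSpace.single s (1 : ℝ)) := by
    refine Prod.ext ?_ ?_
    · simp [Prod.fst_sum]
    · have h1 : ∑ s, y s • EuclideanSpace.single s (1 : ℝ) = yvec := sum_single_eq yvec
      simp only [Prod.snd_add, Prod.smul_snd, Prod.snd_sum, Prod.snd_neg, neg_smul, smul_zero,
        zero_add, Finset.sum_neg_distrib, neg_inj]
      rw [h1]
  have hval : φ ((r, -yvec) : ℝ × EuclideanSpace ℝ (Fin n)) = r * t - ∑ s, y s ^ 2 := by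
    rw [hdecomp, map_add, map_smul, map_sum]
    simp only [map_smul, smul_eq_mul]
    rw [sub_eq_add_neg, ← Finset.sum_neg_distrib]
    refine congrArg₂ (· + ·) (by ring) (Finset.sum_congr rfl fun s _ => ?_)
    show -(y s) * y s = -(y s ^ 2)
    ring
  have hpos := hφ _ hmem
  rw [hval] at hpos
  refine ⟨ht, ?_⟩
  nlinarith [sq_nonneg (t - r)]

def hermFunctional {d : ℕ} (v : Fin d → ℂ) : Module.Dual ℝ (HermMat d) where
  toFun A := (dotProduct (star v) ((A : Matrix (Fin d) (Fin d) ℂ).mulVec v)).re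
  map_add' A B := by
    simp [Matrix.add_mulVec, dotProduct_add]
  map_smul' r A := by
    simp [Matrix.smul_mulVec, dotProduct_smul]

@[simp] lemma hermFunctional_apply {d : ℕ} (v : Fin d → ℂ) (A : HermMat d) :
    hermFunctional v A
      = (dotProduct (star v) ((A : Matrix (Fin d) (Fin d) ℂ).mulVec v)).re := rfl

lemma hermFunctional_mem {d : ℕ} (v : Fin d → ℂ) :
    hermFunctional v ∈ dualConeSet (psdCone d) := by
  intro A hA
  simpa using (Complex.nonneg_iff.mp (hA.dotProduct_mulVec_nonneg v)).1

lemma posSemidef_of_forall {d : ℕ} (A : HermMat d)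
    (h : ∀ v : Fin d → ℂ, 0 ≤ hermFunctional v A) :
    A ∈ psdCone d := by
  have hherm : (A : Matrix (Fin d) (Fin d) ℂ).IsHermitian := A.prop
  refine Matrix.PosSemidef.of_dotProduct_mulVec_nonneg hherm fun x => ?_
  rw [Complex.nonneg_iff]
  constructor
  · simpa using h x
  · set z := dotProduct (star x) ((A : Matrix (Fin d) (Fin d) ℂ).mulVec x) with hz
    have hself : star z = z := by
      rw [hz, ← Matrix.star_dotProduct_star, star_star, Matrix.star_mulVec, hherm.eq,
        ← Matrix.dotProduct_mulVec]
    exact (Complex.conj_eq_iff_im.mp hself).symm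

section Pairing

variable {n d : ℕ}

lemma pairing_Z (φ : Module.Dual ℝ (ℝ × EuclideanSpace ℝ (Fin n)))
    (ψ : Module.Dual ℝ (HermMat d)) (X₀ : HermMat d) (X : Fin n → HermMat d) :
    TensorProduct.dualDistrib ℝ (ℝ × EuclideanSpace ℝ (Fin n)) (HermMat d) (φ ⊗ₜ[ℝ] ψ)
        ((((1 : ℝ), (0 : EuclideanSpace ℝ (Fin n))) ⊗ₜ[ℝ] X₀ +
          ∑ s, ((0 : ℝ), (EuclideanSpace.single s (1 : ℝ))) ⊗ₜ[ℝ] X s))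
      = φ ((1 : ℝ), (0 : EuclideanSpace ℝ (Fin n))) * ψ X₀ +
          ∑ s, φ ((0 : ℝ), EuclideanSpace.single s (1 : ℝ)) * ψ (X s) := by
  simp [map_add, map_sum, TensorProduct.dualDistrib_apply]

lemma pairing_W (ψ₁ ψ₂ : Module.Dual ℝ (HermMat d)) (X₀ : HermMat d) (X : Fin n → HermMat d) :
    TensorProduct.dualDistrib ℝ (HermMat d) (HermMat d) (ψ₁ ⊗ₜ[ℝ] ψ₂)
        (X₀ ⊗ₜ[ℝ] X₀ - ∑ s, X s ⊗ₜ[ℝ] X s)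
      = ψ₁ X₀ * ψ₂ X₀ - ∑ s, ψ₁ (X s) * ψ₂ (X s) := by
  simp [map_sub, map_sum, TensorProduct.dualDistrib_apply]

end Pairing

lemma psi_bounds {n d : ℕ} {X₀ : HermMat d} {X : Fin n → HermMat d}
    (hZ : ((((1 : ℝ), (0 : EuclideanSpace ℝ (Fin n))) ⊗ₜ[ℝ] X₀ +
        ∑ s, ((0 : ℝ), (EuclideanSpace.single s (1 : ℝ))) ⊗ₜ[ℝ] X s) ∈
          maxTensor (lorentzCone n) (psdCone d)))
    (ψ : Module.Dual ℝ (HermMat d)) (hψ : ψ ∈ dualConeSet (psdCone d)) :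
    0 ≤ ψ X₀ ∧ ∑ s, ψ (X s) ^ 2 ≤ (ψ X₀) ^ 2 := by
  have key : ∀ y : Fin n → ℝ, ∑ s, y s ^ 2 ≤ 1 → 0 ≤ ψ X₀ + ∑ s, y s * ψ (X s) := by
    intro y hy
    have h := hZ (lorentzFunctional 1 y)
      (lorentzFunctional_mem 1 y zero_le_one (by simpa using hy)) ψ hψ
    rw [pairing_Z] at h
    simpa [lorentzFunctional_apply, EuclideanSpace.single_apply, mul_ite,
      Finset.sum_ite_eq'] using h
  have ha : 0 ≤ ψ X₀ := by
    have := key 0 (by simp)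
    simpa using this
  refine ⟨ha, ?_⟩
  set S := ∑ s, ψ (X s) ^ 2 with hSdef
  have hS0 : 0 ≤ S := Finset.sum_nonneg fun s _ => sq_nonneg _
  rcases eq_or_lt_of_le hS0 with hS | hS
  · rw [← hS]; positivity
  · set r := Real.sqrt S with hrdef
    have hrpos : 0 < r := Real.sqrt_pos.mpr hS
    have hr2 : r ^ 2 = S := Real.sq_sqrt hS0
    have hy : ∑ s, (-(ψ (X s)) / r) ^ 2 = 1 := by
      have h1 : ∀ s : Fin n, (-(ψ (X s)) / r) ^ 2 = ψ (X s) ^ 2 / r ^ 2 := fun s => by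
        rw [div_pow, neg_sq]
      rw [Finset.sum_congr rfl fun s _ => h1 s, ← Finset.sum_div, ← hSdef, hr2,
        div_self (ne_of_gt hS)]
    have h := key (fun s => -(ψ (X s)) / r) (le_of_eq hy)
    have hsum : ∑ s, (-(ψ (X s)) / r) * ψ (X s) = -(S / r) := by
      have h1 : ∀ s : Fin n, (-(ψ (X s)) / r) * ψ (X s) = -(ψ (X s) ^ 2) / r := fun s => by
        ring
      rw [Finset.sum_congr rfl fun s _ => h1 s, ← Finset.sum_div, Finset.sum_neg_distrib,
        ← hSdef, neg_div]
    rw [hsum] at h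
    -- h : 0 ≤ ψ X₀ + -(S / r)
    have hge : S / r ≤ ψ X₀ := by linarith
    have hSr : S / r = r := by
      rw [← hr2]; field_simp [ne_of_gt hrpos]
    nlinarith [hr2, hrpos.le, hge, hSr]

/-- **Proposition (maximal tensor product with a Lorentz cone).** For Hermitian matrices
`X₀, X₁, …, X_n`, the tensor `Σ_s e_s ⊗ X_s` lies in `L_n ⊗max PSD(ℂ^d)` iff `X₀ ⪰ 0` and
`X₀ ⊗ X₀ − Σ_{s≥1} X_s ⊗ X_s ∈ PSD(ℂ^d) ⊗max PSD(ℂ^d)`. -/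
theorem maxTensor_lorentz_psd_iff (n d : ℕ) (hn : 1 ≤ n) (hd : 1 ≤ d)
    (X₀ : HermMat d) (X : Fin n → HermMat d) :
    ((((1 : ℝ), (0 : EuclideanSpace ℝ (Fin n))) ⊗ₜ[ℝ] X₀ +
        ∑ s, ((0 : ℝ), (EuclideanSpace.single s (1 : ℝ))) ⊗ₜ[ℝ] X s) ∈
          maxTensor (lorentzCone n) (psdCone d)) ↔
      (X₀ ∈ psdCone d ∧
        (X₀ ⊗ₜ[ℝ] X₀ - ∑ s, X s ⊗ₜ[ℝ] X s) ∈ maxTensor (psdCone d) (psdCone d)) := by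
  constructor
  · intro hZ
    refine ⟨posSemidef_of_forall X₀ fun v => ?_, ?_⟩
    · exact (psi_bounds hZ (hermFunctional v) (hermFunctional_mem v)).1
    · intro ψ₁ hψ₁ ψ₂ hψ₂
      rw [pairing_W]
      obtain ⟨ha1, hb1⟩ := psi_bounds hZ ψ₁ hψ₁
      obtain ⟨ha2, hb2⟩ := psi_bounds hZ ψ₂ hψ₂
      have := key_ineq (fun s => -(ψ₁ (X s))) (fun s => ψ₂ (X s)) _ _ ha1 ha2
        (by simpa using hb1) hb2
      simpa [sub_eq_add_neg, ← Finset.sum_neg_distrib, neg_mul] using this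
  · rintro ⟨hX₀, hW⟩ φ hφ ψ hψ
    rw [pairing_Z]
    obtain ⟨ht, hy⟩ := dual_lorentz_bounds φ hφ
    have ha : 0 ≤ ψ X₀ := hψ X₀ hX₀
    have hu : ∑ s, ψ (X s) ^ 2 ≤ (ψ X₀) ^ 2 := by
      have h := hW ψ hψ ψ hψ
      rw [pairing_W] at h
      have h2 : ∑ s, ψ (X s) * ψ (X s) = ∑ s, ψ (X s) ^ 2 :=
        Finset.sum_congr rfl fun s _ => (sq (ψ (X s))).symm ▸ by ring
      linarith [h2 ▸ h]
    exact key_ineq _ _ _ _ ht ha hy hu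

end
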